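/- Suppose Δ ⊆ ℝ^m is nonempty and bounded, f is lower semicontinuous on X × cl(Δ), Assumptions 2 and 3 hold, and there exists L_g ≥ 0 such that |g_d(ω) − g_d(ω')| ≤ L_g · max_{1≤i≤d} ‖δ_i − δ'_i‖ for all ω, ω' ∈ cl(Δ)^d. Let δ*_1,…,δ*_d ∈ cl(Δ) satisfy g_d(δ*_1,…,δ*_d) = J*. Then for every nonempty finite subset S ⊆ cl(Δ), inf { c·x : x ∈ X, f(x,δ) ≤ 0 for all δ ∈ S } ≥ J* − L_g · max_{1≤i≤d} min_{δ ∈ S} ‖δ*_i − δ‖. -/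

import Mathlib

open MeasureTheory Set

/-- Scenario optimal value `g_N(ω) = inf { c·x : x ∈ X, f(x, δ_i) ≤ 0, i = 1,…,N }`. -/
noncomputable def scenVal {d m N : ℕ} (X : Set (EuclideanSpace ℝ (Fin d)))
    (c : EuclideanSpace ℝ (Fin d))
    (f : EuclideanSpace ℝ (Fin d) → EuclideanSpace ℝ (Fin m) → ℝ)
    (ω : Fin N → EuclideanSpace ℝ (Fin m)) : ℝ :=
  sInf ((fun x => ∑ i, c i * x i) '' {x ∈ X | ∀ i, f x (ω i) ≤ 0})

/-- Robust optimal value `J* = inf { c·x : x ∈ X, f(x,δ) ≤ 0 for all δ ∈ Δ }`. -/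
noncomputable def robustVal {d m : ℕ} (X : Set (EuclideanSpace ℝ (Fin d)))
    (c : EuclideanSpace ℝ (Fin d))
    (f : EuclideanSpace ℝ (Fin d) → EuclideanSpace ℝ (Fin m) → ℝ)
    (Δ : Set (EuclideanSpace ℝ (Fin m))) : ℝ :=
  sInf ((fun x => ∑ i, c i * x i) '' {x ∈ X | ∀ δ ∈ Δ, f x δ ≤ 0})

/-- Under the hypotheses of Statement 7, if δ*_1,…,δ*_d ∈ cl(Δ) satisfy
g_d(δ*_1,…,δ*_d) = J*, then for every nonempty finite S ⊆ cl(Δ),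
inf { c·x : x ∈ X, f(x,δ) ≤ 0 ∀ δ ∈ S } ≥ J* − L_g · max_i min_{δ ∈ S} ‖δ*_i − δ‖. -/
theorem stmt_8 {d m : ℕ} (hd : 1 ≤ d)
    (X : Set (EuclideanSpace ℝ (Fin d))) (c : EuclideanSpace ℝ (Fin d))
    (Δ : Set (EuclideanSpace ℝ (Fin m))) (hΔne : Δ.Nonempty)
    (hΔbdd : Bornology.IsBounded Δ)
    (f : EuclideanSpace ℝ (Fin d) → EuclideanSpace ℝ (Fin m) → ℝ)
    (hlsc : LowerSemicontinuousOn (Function.uncurry f) (X ×ˢ closure Δ))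
    -- Assumption 2
    (hfeas : ∃ x ∈ X, ∀ δ ∈ Δ, f x δ ≤ 0)
    -- Assumption 3 (X compact convex, f(·,δ) convex)
    (hXcomp : IsCompact X) (hXconv : Convex ℝ X)
    (hconv : ∀ δ ∈ Δ, ConvexOn ℝ X fun x => f x δ)
    -- Lipschitz condition on g_d
    (Lg : ℝ) (hLg : 0 ≤ Lg)
    (hLip : ∀ ω ω' : Fin d → EuclideanSpace ℝ (Fin m),
      (∀ i, ω i ∈ closure Δ) → (∀ i, ω' i ∈ closure Δ) →
      |scenVal X c f ω - scenVal X c f ω'| ≤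
        Lg * Finset.univ.sup' (Finset.univ_nonempty_iff.mpr ⟨⟨0, hd⟩⟩)
          (fun i => ‖ω i - ω' i‖))
    -- a maximizer δ* of g_d
    (ωstar : Fin d → EuclideanSpace ℝ (Fin m)) (hωstar : ∀ i, ωstar i ∈ closure Δ)
    (hωstarJ : scenVal X c f ωstar = robustVal X c f Δ)
    -- a nonempty finite subset S of cl(Δ)
    (S : Finset (EuclideanSpace ℝ (Fin m))) (hSne : S.Nonempty)
    (hS : (S : Set (EuclideanSpace ℝ (Fin m))) ⊆ closure Δ) :
    robustVal X c f Δ -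
        Lg * Finset.univ.sup' (Finset.univ_nonempty_iff.mpr ⟨⟨0, hd⟩⟩)
          (fun i => S.inf' hSne fun δ => ‖ωstar i - δ‖) ≤
      sInf ((fun x => ∑ i, c i * x i) ''
        {x ∈ X | ∀ δ ∈ S, f x δ ≤ 0}) := by
  obtain ⟨x₀, hx₀X, hx₀⟩ := hfeas
  -- x₀ is feasible for every δ in the closure of Δ
  have hx₀cl : ∀ δ ∈ closure Δ, f x₀ δ ≤ 0 := by
    intro δ hδ
    by_contra h
    push_neg at h
    have hev := hlsc (x₀, δ) ⟨hx₀X, hδ⟩ 0 h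
    have hmap : Filter.Tendsto (fun δ' => (x₀, δ'))
        (nhdsWithin δ Δ) (nhdsWithin (x₀, δ) (X ×ˢ closure Δ)) := by
      apply tendsto_nhdsWithin_of_tendsto_nhds_of_eventually_within
      · exact ((Continuous.prodMk_right x₀).tendsto δ).mono_left nhdsWithin_le_nhds
      · filter_upwards [self_mem_nhdsWithin] with δ' hδ'
        exact ⟨hx₀X, subset_closure hδ'⟩
    have hev2 : ∀ᶠ δ' in nhdsWithin δ Δ, 0 < f x₀ δ' := hmap.eventually hev
    have hne : (nhdsWithin δ Δ).NeBot := mem_closure_iff_nhdsWithin_neBot.mp hδ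
    obtain ⟨δ', hδ'Δ, hδ'pos⟩ := (hev2.and self_mem_nhdsWithin).exists
    exact absurd (hx₀ δ' hδ'pos) (not_le.mpr hδ'Δ)
  have hcont : Continuous fun x : EuclideanSpace ℝ (Fin d) => ∑ i, c i * x i := by
    exact continuous_finset_sum _ fun i _ => continuous_const.mul (PiLp.continuous_apply 2 _ i)
  have hbdd : BddBelow ((fun x : EuclideanSpace ℝ (Fin d) => ∑ i, c i * x i) '' X) :=
    (hXcomp.image hcont).bddBelow
  -- choose nearest points
  choose g hg₁ hg₂ using fun i => S.exists_mem_eq_inf' hSne (fun δ => ‖ωstar i - δ‖)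
  have hgcl : ∀ i, g i ∈ closure Δ := fun i => hS (hg₁ i)
  -- scenVal at g is below the target infimum
  have h1 : scenVal X c f g ≤
      sInf ((fun x => ∑ i, c i * x i) '' {x ∈ X | ∀ δ ∈ S, f x δ ≤ 0}) := by
    apply csInf_le_csInf
    · exact hbdd.mono (Set.image_mono (fun x hx => hx.1))
    · exact ⟨_, ⟨x₀, ⟨hx₀X, fun δ hδ => hx₀cl δ (hS hδ)⟩, rfl⟩⟩
    · apply Set.image_mono
      intro x hx
      exact ⟨hx.1, fun i => hx.2 (g i) (hg₁ i)⟩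
  -- Lipschitz bound
  have h2 := hLip ωstar g hωstar hgcl
  rw [hωstarJ] at h2
  have h3 : (Finset.univ.sup' (Finset.univ_nonempty_iff.mpr ⟨⟨0, hd⟩⟩)
      (fun i => ‖ωstar i - g i‖)) =
      Finset.univ.sup' (Finset.univ_nonempty_iff.mpr ⟨⟨0, hd⟩⟩)
        (fun i => S.inf' hSne fun δ => ‖ωstar i - δ‖) := by
    apply Finset.sup'_congr _ rfl
    intro i _
    exact (hg₂ i).symm
  rw [h3] at h2
  have h4 := abs_le.mp h2
  linarith [h4.2, h1]
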